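/- Define N* := E[r_θ̃(Z⁰)] and N̂ := (1/n₀)Σ_{i=1}^{n₀} r_θ̂(Zᵢ⁰). There exists a constant C_N, depending only on C₀, ‖f‖_∞ and ‖θ̃‖, such that for every δ ∈ (0, 1/2] with n_min := min{n₀, n₁} > C_N log(1/δ), with probability at least 1 − δ, |N* − N̂| ≤ √(C_N log(1/δ)/n_min). -/

import Mathlib

open MeasureTheory ProbabilityTheory

lemma my_exp_le_one_add_add_sq {x : ℝ} (hx : |x| ≤ 1) : Real.exp x ≤ 1 + x + x ^ 2 := by
  have h := Real.exp_bound hx (n := 2) (by norm_num)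
  have hsum : ∑ i ∈ Finset.range 2, x ^ i / (Nat.factorial i : ℝ) = 1 + x := by
    simp [Finset.sum_range_succ]
  rw [hsum] at h
  have h2 := (abs_le.mp h).2
  norm_num [Nat.factorial] at h2
  nlinarith [sq_abs x, abs_nonneg x]

lemma my_abs_exp_sub_exp_le {x y c : ℝ} (hx : x ≤ c) (hy : y ≤ c) :
    |Real.exp x - Real.exp y| ≤ Real.exp c * |x - y| := by
  wlog h : y ≤ x
  · rw [abs_sub_comm, abs_sub_comm x y]; exact this hy hx (le_of_not_ge h)
  rw [abs_of_nonneg (sub_nonneg.mpr (Real.exp_le_exp.mpr h)), abs_of_nonneg (sub_nonneg.mpr h)]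
  have he : Real.exp x * Real.exp (y - x) = Real.exp y := by
    rw [← Real.exp_add]; ring_nf
  nlinarith [Real.exp_pos x, Real.add_one_le_exp (y - x), Real.exp_le_exp.mpr hx,
    Real.exp_pos (y - x)]

lemma my_integrable_of_bound {Ω : Type*} [MeasurableSpace Ω] {P : Measure Ω}
    [IsProbabilityMeasure P] {h : Ω → ℝ} (hm : Measurable h) {C : ℝ}
    (hb : ∀ ω, |h ω| ≤ C) : Integrable h P :=
  (integrable_const C).mono' hm.aestronglyMeasurable (ae_of_all _ fun ω => by
    simpa using hb ω)

lemma my_mgf_le_of_bounded {Ω : Type*} [MeasurableSpace Ω] {P : Measure Ω}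
    [IsProbabilityMeasure P] {Y : Ω → ℝ} (hY : Measurable Y) {B t : ℝ} (hB : 0 < B)
    (hbd : ∀ ω, |Y ω| ≤ B) (hmean : ∫ ω, Y ω ∂P = 0)
    (ht : 0 ≤ t) (htB : t * B ≤ 1) :
    mgf Y P t ≤ Real.exp (t ^ 2 * B ^ 2) := by
  have hint1 : Integrable Y P := my_integrable_of_bound hY hbd
  have hint2 : Integrable (fun ω => Y ω ^ 2) P := by
    refine my_integrable_of_bound (hY.pow_const 2) (C := B ^ 2) fun ω => ?_
    rw [abs_pow]
    exact pow_le_pow_left₀ (abs_nonneg _) (hbd ω) 2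
  have hptw : ∀ ω, Real.exp (t * Y ω) ≤ 1 + t * Y ω + t ^ 2 * Y ω ^ 2 := by
    intro ω
    have habs : |t * Y ω| ≤ 1 := by
      rw [abs_mul, abs_of_nonneg ht]
      exact le_trans (mul_le_mul_of_nonneg_left (hbd ω) ht) htB
    have := my_exp_le_one_add_add_sq habs
    calc Real.exp (t * Y ω) ≤ 1 + t * Y ω + (t * Y ω) ^ 2 := this
    _ = 1 + t * Y ω + t ^ 2 * Y ω ^ 2 := by ring
  have hintexp : Integrable (fun ω => Real.exp (t * Y ω)) P := by
    refine my_integrable_of_bound (hY.const_mul t).exp (C := Real.exp (t * B)) fun ω => ?_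
    rw [abs_of_pos (Real.exp_pos _), Real.exp_le_exp]
    exact mul_le_mul_of_nonneg_left (le_trans (le_abs_self _) (hbd ω)) ht
  have hintrhs : Integrable (fun ω => 1 + t * Y ω + t ^ 2 * Y ω ^ 2) P :=
    ((integrable_const 1).add (hint1.const_mul t)).add (hint2.const_mul (t ^ 2))
  have h1 : mgf Y P t ≤ ∫ ω, (1 + t * Y ω + t ^ 2 * Y ω ^ 2) ∂P :=
    integral_mono hintexp hintrhs hptw
  have h2 : ∫ ω, (1 + t * Y ω + t ^ 2 * Y ω ^ 2) ∂P = 1 + t ^ 2 * ∫ ω, Y ω ^ 2 ∂P := by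
    have hi12 : Integrable (fun ω => 1 + t * Y ω) P :=
      ((integrable_const (1 : ℝ)).add (hint1.const_mul t) :)
    rw [integral_add hi12 (hint2.const_mul (t ^ 2))]
    rw [integral_add (integrable_const (1 : ℝ)) (hint1.const_mul t),
      integral_const_mul, integral_const_mul, hmean]
    simp
  have h3 : ∫ ω, Y ω ^ 2 ∂P ≤ B ^ 2 := by
    calc ∫ ω, Y ω ^ 2 ∂P ≤ ∫ _ω, B ^ 2 ∂P := by
          refine integral_mono hint2 (integrable_const _) fun ω => ?_
          calc Y ω ^ 2 = |Y ω| ^ 2 := (sq_abs _).symm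
          _ ≤ B ^ 2 := pow_le_pow_left₀ (abs_nonneg _) (hbd ω) 2
    _ = B ^ 2 := by simp
  calc mgf Y P t ≤ 1 + t ^ 2 * ∫ ω, Y ω ^ 2 ∂P := h1.trans h2.le
  _ ≤ 1 + t ^ 2 * B ^ 2 := by nlinarith [sq_nonneg t]
  _ ≤ Real.exp (t ^ 2 * B ^ 2) := by
      have := Real.add_one_le_exp (t ^ 2 * B ^ 2); linarith

lemma my_chernoff_upper {Ω ι : Type*} [MeasurableSpace Ω] {P : Measure Ω}
    [IsProbabilityMeasure P] (W : ι → Ω → ℝ)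
    (hindep : iIndepFun W P)
    (hmeas : ∀ i, Measurable (W i)) {B : ℝ} (hB : 0 < B) (s : Finset ι)
    (hbd : ∀ i ∈ s, ∀ ω, |W i ω| ≤ B) (hmean : ∀ i ∈ s, ∫ ω, W i ω ∂P = 0)
    {a : ℝ} (ha : 0 ≤ a) (haB : a ≤ 2 * B) :
    P {ω | (s.card : ℝ) * a ≤ ∑ i ∈ s, W i ω} ≤
      ENNReal.ofReal (Real.exp (-((s.card : ℝ) * a ^ 2 / (4 * B ^ 2)))) := by
  set t := a / (2 * B ^ 2) with hts
  have ht : 0 ≤ t := by positivity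
  have htB : t * B ≤ 1 := by
    rw [hts, div_mul_eq_mul_div, div_le_one (by positivity)]; nlinarith
  have h_int : ∀ i ∈ s, Integrable (fun ω => Real.exp (t * W i ω)) P := by
    intro i hi
    refine my_integrable_of_bound ((hmeas i).const_mul t).exp (C := Real.exp (t * B)) fun ω => ?_
    rw [abs_of_pos (Real.exp_pos _), Real.exp_le_exp]
    exact mul_le_mul_of_nonneg_left (le_trans (le_abs_self _) (hbd i hi ω)) ht
  have key := measure_ge_le_exp_mul_mgf (μ := P) (X := ∑ i ∈ s, W i) ((s.card : ℝ) * a) ht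
    (hindep.integrable_exp_mul_sum hmeas h_int)
  have hmgf : mgf (∑ i ∈ s, W i) P t ≤ Real.exp ((s.card : ℝ) * (t ^ 2 * B ^ 2)) := by
    rw [hindep.mgf_sum hmeas s]
    calc ∏ i ∈ s, mgf (W i) P t ≤ ∏ _i ∈ s, Real.exp (t ^ 2 * B ^ 2) :=
        Finset.prod_le_prod (fun i _ => mgf_nonneg) (fun i hi =>
          my_mgf_le_of_bounded (hmeas i) hB (hbd i hi) (hmean i hi) ht htB)
    _ = Real.exp ((s.card : ℝ) * (t ^ 2 * B ^ 2)) := by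
        rw [Finset.prod_const, ← Real.exp_nat_mul]
  have hset : {ω | (s.card : ℝ) * a ≤ (∑ i ∈ s, W i) ω}
      = {ω | (s.card : ℝ) * a ≤ ∑ i ∈ s, W i ω} := by
    simp [Finset.sum_apply]
  rw [hset] at key
  have hfin : P {ω | (s.card : ℝ) * a ≤ ∑ i ∈ s, W i ω} ≠ ⊤ := measure_ne_top _ _
  rw [ENNReal.le_ofReal_iff_toReal_le hfin (Real.exp_pos _).le]
  refine key.trans ?_
  calc Real.exp (-t * ((s.card : ℝ) * a)) * mgf (∑ i ∈ s, W i) P t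
      ≤ Real.exp (-t * ((s.card : ℝ) * a)) * Real.exp ((s.card : ℝ) * (t ^ 2 * B ^ 2)) := by
        exact mul_le_mul_of_nonneg_left hmgf (Real.exp_pos _).le
  _ = Real.exp (-((s.card : ℝ) * a ^ 2 / (4 * B ^ 2))) := by
      rw [← Real.exp_add]; congr 1; rw [hts]; field_simp; ring

lemma my_chernoff_abs {Ω ι : Type*} [MeasurableSpace Ω] {P : Measure Ω}
    [IsProbabilityMeasure P] (W : ι → Ω → ℝ)
    (hindep : iIndepFun W P)
    (hmeas : ∀ i, Measurable (W i)) {B : ℝ} (hB : 0 < B) (s : Finset ι)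
    (hbd : ∀ i ∈ s, ∀ ω, |W i ω| ≤ B) (hmean : ∀ i ∈ s, ∫ ω, W i ω ∂P = 0)
    {a : ℝ} (ha : 0 ≤ a) (haB : a ≤ 2 * B) :
    P {ω | (s.card : ℝ) * a ≤ |∑ i ∈ s, W i ω|} ≤
      ENNReal.ofReal (2 * Real.exp (-((s.card : ℝ) * a ^ 2 / (4 * B ^ 2)))) := by
  have h1 := my_chernoff_upper W hindep hmeas hB s hbd hmean ha haB
  have hindep' : iIndepFun (fun i => -W i) P :=
    hindep.comp (fun _ => (Neg.neg : ℝ → ℝ)) (fun _ => measurable_neg)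
  have h2 := my_chernoff_upper (fun i => -W i) hindep' (fun i => (hmeas i).neg) hB s
    (fun i hi ω => by simpa [abs_neg] using hbd i hi ω)
    (fun i hi => by
      simp only [Pi.neg_apply]
      rw [integral_neg, hmean i hi, neg_zero]) ha haB
  have hsub : {ω | (s.card : ℝ) * a ≤ |∑ i ∈ s, W i ω|} ⊆
      {ω | (s.card : ℝ) * a ≤ ∑ i ∈ s, W i ω}
        ∪ {ω | (s.card : ℝ) * a ≤ ∑ i ∈ s, (fun j => -W j) i ω} := by
    intro ω hω
    rw [Set.mem_setOf_eq] at hω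
    rcases le_abs.mp hω with h | h
    · exact Or.inl h
    · refine Or.inr ?_
      simp only [Pi.neg_apply, Set.mem_setOf_eq, Finset.sum_neg_distrib]
      exact h
  calc P {ω | (s.card : ℝ) * a ≤ |∑ i ∈ s, W i ω|}
      ≤ P ({ω | (s.card : ℝ) * a ≤ ∑ i ∈ s, W i ω}
        ∪ {ω | (s.card : ℝ) * a ≤ ∑ i ∈ s, (fun j => -W j) i ω}) := measure_mono hsub
  _ ≤ P {ω | (s.card : ℝ) * a ≤ ∑ i ∈ s, W i ω}
        + P {ω | (s.card : ℝ) * a ≤ ∑ i ∈ s, (fun j => -W j) i ω} := measure_union_le _ _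
  _ ≤ ENNReal.ofReal (Real.exp (-((s.card : ℝ) * a ^ 2 / (4 * B ^ 2))))
        + ENNReal.ofReal (Real.exp (-((s.card : ℝ) * a ^ 2 / (4 * B ^ 2)))) := add_le_add h1 h2
  _ = ENNReal.ofReal (2 * Real.exp (-((s.card : ℝ) * a ^ 2 / (4 * B ^ 2)))) := by
      rw [← ENNReal.ofReal_add (Real.exp_pos _).le (Real.exp_pos _).le]; ring_nf

open scoped RealInnerProductSpace

set_option maxHeartbeats 2000000 in
/-- **Finite sample bound for the KLIEP normalising constant.**
With `N* = E[r_θ̃(Z⁰)]` and `N̂ = (1/n₀) ∑ᵢ r_θ̂(Zᵢ⁰)`, there is a constant `C_N`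
(depending only on `C₀`, `‖f‖_∞` and `‖θ̃‖`) such that for every `δ ∈ (0,1/2]` with
`n_min > C_N log(1/δ)`, with probability at least `1 − δ`,
`|N* − N̂| ≤ √(C_N log(1/δ)/n_min)`. -/
theorem kliep_normalising_constant_bound
    {𝒵 : Type*} [MeasurableSpace 𝒵]
    {Ω : Type*} [MeasurableSpace Ω] (P : Measure Ω) [IsProbabilityMeasure P]
    {d : ℕ}
    (f : 𝒵 → EuclideanSpace ℝ (Fin d)) (hfmeas : Measurable f)
    (b : ℝ) (hfb : ∀ z, ‖f z‖ ≤ b)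
    (Z₁ Z₀ : Ω → 𝒵) (hZ₁ : Measurable Z₁) (hZ₀ : Measurable Z₀)
    (Zs : Bool → ℕ → Ω → 𝒵)
    (hZsmeas : ∀ c i, Measurable (Zs c i))
    (hindep : iIndepFun (fun (q : Bool × ℕ) => Zs q.1 q.2) P)
    (hident₁ : ∀ i, IdentDistrib (Zs true i) Z₁ P P)
    (hident₀ : ∀ i, IdentDistrib (Zs false i) Z₀ P P)
    (σmin : ℝ) (hσpos : 0 < σmin)
    (hσmin : ∀ v : EuclideanSpace ℝ (Fin d),
      σmin * ‖v‖ ^ 2 ≤ ∫ ω, (⟪v, f (Z₀ ω)⟫ - ∫ ω', ⟪v, f (Z₀ ω')⟫ ∂P) ^ 2 ∂P)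
    -- `θ̃` minimises the population KLIEP loss
    (θt : EuclideanSpace ℝ (Fin d))
    (hθt : ∀ θ : EuclideanSpace ℝ (Fin d),
      (-∫ ω, ⟪θt, f (Z₁ ω)⟫ ∂P) + Real.log (∫ ω, Real.exp ⟪θt, f (Z₀ ω)⟫ ∂P)
        ≤ (-∫ ω, ⟪θ, f (Z₁ ω)⟫ ∂P) + Real.log (∫ ω, Real.exp ⟪θ, f (Z₀ ω)⟫ ∂P))
    -- `θ̂ = θh n₀ n₁` minimises the empirical KLIEP loss
    (θh : ℕ → ℕ → Ω → EuclideanSpace ℝ (Fin d))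
    (hθh : ∀ (n₀ n₁ : ℕ) (ω : Ω) (θ : EuclideanSpace ℝ (Fin d)),
      (-(1 / (n₁ : ℝ)) * ∑ i ∈ Finset.range n₁, ⟪θh n₀ n₁ ω, f (Zs true i ω)⟫)
          + Real.log ((1 / (n₀ : ℝ)) * ∑ i ∈ Finset.range n₀,
              Real.exp ⟪θh n₀ n₁ ω, f (Zs false i ω)⟫)
        ≤ (-(1 / (n₁ : ℝ)) * ∑ i ∈ Finset.range n₁, ⟪θ, f (Zs true i ω)⟫)
          + Real.log ((1 / (n₀ : ℝ)) * ∑ i ∈ Finset.range n₀,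
              Real.exp ⟪θ, f (Zs false i ω)⟫))
    -- `C₀` is the constant from the KLIEP finite-sample bound for `‖θ̂ − θ̃‖`
    (C₀ : ℝ) (hC₀one : 1 ≤ C₀)
    (hC₀ : ∀ δ : ℝ, δ ∈ Set.Ioc (0 : ℝ) (1 / 2) → ∀ n₀ n₁ : ℕ,
      C₀ * Real.log (1 / δ) ≤ ((min n₀ n₁ : ℕ) : ℝ) →
      ENNReal.ofReal (1 - δ) ≤
        P {ω | ‖θh n₀ n₁ ω - θt‖
            ≤ Real.sqrt (C₀ * Real.log (1 / δ) / ((min n₀ n₁ : ℕ) : ℝ))}) :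
    ∃ C_N : ℝ, ∀ δ : ℝ, δ ∈ Set.Ioc (0 : ℝ) (1 / 2) → ∀ n₀ n₁ : ℕ,
      C_N * Real.log (1 / δ) < ((min n₀ n₁ : ℕ) : ℝ) →
      ENNReal.ofReal (1 - δ) ≤
        P {ω | |(∫ ω', Real.exp ⟪θt, f (Z₀ ω')⟫ ∂P)
              - (1 / (n₀ : ℝ)) * ∑ i ∈ Finset.range n₀,
                  Real.exp ⟪θh n₀ n₁ ω, f (Zs false i ω)⟫|
            ≤ Real.sqrt (C_N * Real.log (1 / δ) / ((min n₀ n₁ : ℕ) : ℝ))} := by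
  classical
  have hne : Nonempty Ω := by
    by_contra h
    rw [not_nonempty_iff] at h
    have h1 : P Set.univ = 1 := measure_univ
    rw [Set.univ_eq_empty_iff.mpr h, measure_empty] at h1
    exact zero_ne_one h1
  have hb0 : 0 ≤ b := le_trans (norm_nonneg _) (hfb (Z₀ (Classical.arbitrary Ω)))
  set g : 𝒵 → ℝ := fun z => Real.exp ⟪θt, f z⟫ with hgdef
  have hginner : ∀ (θ : EuclideanSpace ℝ (Fin d)) (z : 𝒵), |⟪θ, f z⟫| ≤ ‖θ‖ * b := fun θ z =>
    le_trans (abs_real_inner_le_norm θ (f z)) (mul_le_mul_of_nonneg_left (hfb z) (norm_nonneg θ))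
  have hgmeas : Measurable g := (Measurable.inner measurable_const hfmeas).exp
  set M := Real.exp (b * (‖θt‖ + 1)) with hMdef
  have hMpos : 0 < M := Real.exp_pos _
  have hgle : ∀ z, g z ≤ M := by
    intro z
    rw [hgdef, hMdef]
    apply Real.exp_le_exp.mpr
    have h1 := (abs_le.mp (hginner θt z)).2
    nlinarith [norm_nonneg θt]
  have hgpos : ∀ z, 0 < g z := fun z => Real.exp_pos _
  have habsbd : ∀ z, |g z| ≤ M := fun z => by
    rw [abs_of_pos (hgpos z)]; exact hgle z
  set μs := ∫ ω', Real.exp ⟪θt, f (Z₀ ω')⟫ ∂P with hμdef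
  have hμg : μs = ∫ ω, g (Z₀ ω) ∂P := by rw [hμdef]
  have hgZ₀meas : Measurable fun ω => g (Z₀ ω) := hgmeas.comp hZ₀
  have hμ0 : 0 ≤ μs := by
    rw [hμg]; exact integral_nonneg fun ω => (hgpos _).le
  have hμM : μs ≤ M := by
    rw [hμg]
    calc ∫ ω, g (Z₀ ω) ∂P ≤ ∫ _ω, M ∂P :=
          integral_mono (my_integrable_of_bound hgZ₀meas fun ω => habsbd (Z₀ ω))
            (integrable_const M) fun ω => hgle _
    _ = M := by simp
  set K := Real.sqrt 12 * M + Real.sqrt (2 * C₀) * (b * M) with hKdef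
  have hK0 : 0 ≤ K := by positivity
  refine ⟨K ^ 2 + 2 * C₀ + 3, ?_⟩
  intro δ hδ n₀ n₁ hn
  obtain ⟨hδ0, hδhalf⟩ := hδ
  set CN := K ^ 2 + 2 * C₀ + 3 with hCNdef
  set L := Real.log (1 / δ) with hLdef
  have hlog2 : Real.log 2 ≤ L := by
    rw [hLdef]
    apply Real.log_le_log (by norm_num)
    rw [le_div_iff₀ hδ0]; linarith
  have hLpos : 0 < L := lt_of_lt_of_le (Real.log_pos (by norm_num)) hlog2
  have hCN3 : (3 : ℝ) ≤ CN := by rw [hCNdef]; nlinarith [sq_nonneg K]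
  have h2C : 2 * C₀ ≤ CN := by rw [hCNdef]; nlinarith [sq_nonneg K]
  set n : ℝ := ((min n₀ n₁ : ℕ) : ℝ) with hndef
  have hnL : CN * L < n := hn
  have hnpos : 0 < n := lt_of_le_of_lt (mul_nonneg (by linarith) hLpos.le) hnL
  have hminpos : 0 < min n₀ n₁ := by rw [hndef] at hnpos; exact_mod_cast hnpos
  have hn₀pos : 0 < n₀ := lt_of_lt_of_le hminpos (min_le_left _ _)
  have hn₀R : (0 : ℝ) < (n₀ : ℝ) := by exact_mod_cast hn₀pos
  have hn₀ne : (n₀ : ℝ) ≠ 0 := ne_of_gt hn₀R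
  have hnlen₀ : n ≤ (n₀ : ℝ) := by
    rw [hndef]; exact_mod_cast min_le_left n₀ n₁
  -- apply the θ̂ concentration bound at level δ/2
  have hδ2 : δ / 2 ∈ Set.Ioc (0 : ℝ) (1 / 2) := ⟨by linarith, by linarith⟩
  have hlog2δ : Real.log (1 / (δ / 2)) ≤ 2 * L := by
    have h1 : (1 : ℝ) / (δ / 2) = 2 * (1 / δ) := by field_simp
    rw [h1, Real.log_mul (by norm_num) (by positivity), ← hLdef]
    linarith
  have hlogδ2pos : 0 ≤ Real.log (1 / (δ / 2)) := by
    apply Real.log_nonneg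
    rw [le_div_iff₀ (by linarith : (0:ℝ) < δ / 2)]; linarith
  have hcond : C₀ * Real.log (1 / (δ / 2)) ≤ n := by
    have ha1 : C₀ * Real.log (1 / (δ / 2)) ≤ C₀ * (2 * L) :=
      mul_le_mul_of_nonneg_left hlog2δ (by linarith)
    have ha2 : 2 * C₀ * L ≤ CN * L := mul_le_mul_of_nonneg_right h2C hLpos.le
    nlinarith
  have hA := hC₀ (δ / 2) hδ2 n₀ n₁ hcond
  clear hC₀ hθh hθt hσmin hσpos hZ₁ hident₁ hn
  have hrA : Real.sqrt (C₀ * Real.log (1 / (δ / 2)) / n)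
      ≤ Real.sqrt (2 * C₀ * L / n) := by
    apply Real.sqrt_le_sqrt
    apply (div_le_div_iff_of_pos_right hnpos).mpr
    nlinarith [mul_le_mul_of_nonneg_left hlog2δ (by linarith : (0:ℝ) ≤ C₀)]
  have hrA1 : Real.sqrt (2 * C₀ * L / n) ≤ 1 := by
    rw [show (1 : ℝ) = Real.sqrt 1 by rw [Real.sqrt_one]]
    apply Real.sqrt_le_sqrt
    rw [div_le_one hnpos]
    have ha2 : 2 * C₀ * L ≤ CN * L := mul_le_mul_of_nonneg_right h2C hLpos.le
    linarith
  -- the centered summands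
  set W : Bool × ℕ → Ω → ℝ := fun q => (fun z => g z - μs) ∘ Zs q.1 q.2 with hWdef
  have hWindep : iIndepFun W P := by
    rw [hWdef]
    exact hindep.comp (fun _ => fun z => g z - μs) fun _ => hgmeas.sub measurable_const
  have hWmeas : ∀ q, Measurable (W q) := fun q =>
    (hgmeas.sub measurable_const).comp (hZsmeas q.1 q.2)
  set emb : ℕ ↪ Bool × ℕ := ⟨fun i => ((false : Bool), i), fun a b h => by simpa using h⟩
    with hembdef
  set s : Finset (Bool × ℕ) := (Finset.range n₀).map emb with hsdef
  have hscard : s.card = n₀ := by simp [hsdef]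
  have hWbd : ∀ q ∈ s, ∀ ω, |W q ω| ≤ M := by
    intro q _ ω
    simp only [hWdef, Function.comp_apply]
    have h1 := hgle (Zs q.1 q.2 ω)
    have h2 := (hgpos (Zs q.1 q.2 ω)).le
    refine abs_le.mpr ⟨?_, ?_⟩ <;> linarith
  have hWmean : ∀ q ∈ s, ∫ ω, W q ω ∂P = 0 := by
    intro q hq
    obtain ⟨i, _, rfl⟩ := Finset.mem_map.mp hq
    simp only [hWdef, hembdef, Function.comp_apply, Function.Embedding.coeFn_mk]
    show ∫ ω, g (Zs false i ω) - μs ∂P = 0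
    have hint : Integrable (fun ω => g (Zs false i ω)) P :=
      my_integrable_of_bound (hgmeas.comp (hZsmeas false i)) fun ω => habsbd _
    rw [integral_sub hint (integrable_const μs), integral_const]
    have hid : ∫ ω, g (Zs false i ω) ∂P = μs := by
      rw [hμg]
      have h := ((hident₀ i).comp hgmeas).integral_eq
      simpa [Function.comp] using h
    rw [hid]; simp
  set a := Real.sqrt (12 * M ^ 2 * L / (n₀ : ℝ)) with hadef
  have ha0 : 0 ≤ a := Real.sqrt_nonneg _
  have hasq : a ^ 2 = 12 * M ^ 2 * L / (n₀ : ℝ) := Real.sq_sqrt (by positivity)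
  have h3L : 3 * L ≤ (n₀ : ℝ) := by
    have ha2 : 3 * L ≤ CN * L := mul_le_mul_of_nonneg_right hCN3 hLpos.le
    linarith
  have haB : a ≤ 2 * M := by
    rw [hadef, show (2 : ℝ) * M = Real.sqrt ((2 * M) ^ 2) by
      rw [Real.sqrt_sq (by positivity)]]
    apply Real.sqrt_le_sqrt
    rw [div_le_iff₀ hn₀R]
    nlinarith [mul_le_mul_of_nonneg_left h3L (sq_nonneg M)]
  have hcher := my_chernoff_abs W hWindep hWmeas hMpos s hWbd hWmean ha0 haB
  rw [hscard] at hcher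
  have hexp : (n₀ : ℝ) * a ^ 2 / (4 * M ^ 2) = 3 * L := by
    rw [hasq]; field_simp; ring
  have hδcube : Real.exp (-(3 * L)) = δ ^ 3 := by
    rw [hLdef, one_div, Real.log_inv, show -(3 * -Real.log δ) = Real.log (δ ^ 3) by
      rw [Real.log_pow]; push_cast; ring]
    exact Real.exp_log (by positivity)
  have hδ4 : 2 * Real.exp (-((n₀ : ℝ) * a ^ 2 / (4 * M ^ 2))) ≤ δ / 2 := by
    rw [hexp, hδcube]
    nlinarith [sq_nonneg δ, mul_nonneg hδ0.le hδ0.le, mul_le_mul_of_nonneg_left hδhalf (mul_nonneg hδ0.le hδ0.le)]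
  have hBadle : P {ω | (n₀ : ℝ) * a ≤ |∑ q ∈ s, W q ω|} ≤ ENNReal.ofReal (δ / 2) :=
    hcher.trans (ENNReal.ofReal_le_ofReal hδ4)
  -- the good events
  set Bad := {ω | (n₀ : ℝ) * a ≤ |∑ q ∈ s, W q ω|} with hBaddef
  set A := {ω | ‖θh n₀ n₁ ω - θt‖ ≤ Real.sqrt (C₀ * Real.log (1 / (δ / 2)) / n)} with hAdef
  -- main deterministic inclusion
  have hsubset : A ∩ Badᶜ ⊆ {ω | |μs - (1 / (n₀ : ℝ)) * ∑ i ∈ Finset.range n₀,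
      Real.exp ⟪θh n₀ n₁ ω, f (Zs false i ω)⟫| ≤ Real.sqrt (CN * L / n)} := by
    rintro ω ⟨h1, h2⟩
    rw [hAdef, Set.mem_setOf_eq] at h1
    rw [Set.mem_compl_iff, hBaddef, Set.mem_setOf_eq, not_le] at h2
    rw [Set.mem_setOf_eq]
    have hsum_eq : ∑ q ∈ s, W q ω
        = ∑ i ∈ Finset.range n₀, (g (Zs false i ω) - μs) := by
      rw [hsdef, Finset.sum_map]
      simp only [hWdef, hembdef, Function.comp_apply, Function.Embedding.coeFn_mk]
      rfl
    rw [hsum_eq] at h2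
    -- first term
    have hfirst : |μs - (1 / (n₀ : ℝ)) * ∑ i ∈ Finset.range n₀, g (Zs false i ω)| ≤ a := by
      have key : (1 / (n₀ : ℝ)) * ∑ i ∈ Finset.range n₀, g (Zs false i ω) - μs
          = (1 / (n₀ : ℝ)) * ∑ i ∈ Finset.range n₀, (g (Zs false i ω) - μs) := by
        rw [Finset.sum_sub_distrib, Finset.sum_const, Finset.card_range, nsmul_eq_mul, mul_sub]
        field_simp
      rw [abs_sub_comm, key, abs_mul, abs_of_pos (by positivity : (0:ℝ) < 1 / (n₀ : ℝ))]
      calc (1 / (n₀ : ℝ)) * |∑ i ∈ Finset.range n₀, (g (Zs false i ω) - μs)|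
          ≤ (1 / (n₀ : ℝ)) * ((n₀ : ℝ) * a) :=
            mul_le_mul_of_nonneg_left h2.le (by positivity)
      _ = a := by field_simp
    -- second term
    have hθnorm : ‖θh n₀ n₁ ω - θt‖ ≤ Real.sqrt (2 * C₀ * L / n) := h1.trans hrA
    have hθ1 : ‖θh n₀ n₁ ω - θt‖ ≤ 1 := hθnorm.trans hrA1
    have hθbig : ‖θh n₀ n₁ ω‖ ≤ ‖θt‖ + 1 := by
      have h3 := norm_sub_norm_le (θh n₀ n₁ ω) θt
      linarith
    have hterm : ∀ i ∈ Finset.range n₀,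
        |Real.exp ⟪θh n₀ n₁ ω, f (Zs false i ω)⟫ - g (Zs false i ω)|
          ≤ M * (b * ‖θh n₀ n₁ ω - θt‖) := by
      intro i _
      have hxc : ⟪θh n₀ n₁ ω, f (Zs false i ω)⟫ ≤ b * (‖θt‖ + 1) := by
        have h4 := (abs_le.mp (hginner (θh n₀ n₁ ω) (Zs false i ω))).2
        have h5 : ‖θh n₀ n₁ ω‖ * b ≤ (‖θt‖ + 1) * b :=
          mul_le_mul_of_nonneg_right hθbig hb0
        rw [mul_comm] at h5
        linarith
      have hyc : ⟪θt, f (Zs false i ω)⟫ ≤ b * (‖θt‖ + 1) := by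
        have h4 := (abs_le.mp (hginner θt (Zs false i ω))).2
        have h5 : ‖θt‖ * b ≤ (‖θt‖ + 1) * b :=
          mul_le_mul_of_nonneg_right (by linarith) hb0
        rw [mul_comm] at h5
        linarith
      have h5 := my_abs_exp_sub_exp_le hxc hyc
      rw [← hMdef] at h5
      refine h5.trans ?_
      have hdiff : ⟪θh n₀ n₁ ω, f (Zs false i ω)⟫ - ⟪θt, f (Zs false i ω)⟫
          = ⟪θh n₀ n₁ ω - θt, f (Zs false i ω)⟫ := (inner_sub_left _ _ _).symm
      rw [hdiff]
      apply mul_le_mul_of_nonneg_left ?_ hMpos.le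
      calc |⟪θh n₀ n₁ ω - θt, f (Zs false i ω)⟫| ≤ ‖θh n₀ n₁ ω - θt‖ * b := hginner _ _
      _ = b * ‖θh n₀ n₁ ω - θt‖ := mul_comm _ _
    have hsecond : |(1 / (n₀ : ℝ)) * ∑ i ∈ Finset.range n₀, g (Zs false i ω)
        - (1 / (n₀ : ℝ)) * ∑ i ∈ Finset.range n₀,
            Real.exp ⟪θh n₀ n₁ ω, f (Zs false i ω)⟫|
        ≤ M * (b * ‖θh n₀ n₁ ω - θt‖) := by
      rw [← mul_sub, ← Finset.sum_sub_distrib, abs_mul,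
        abs_of_pos (by positivity : (0:ℝ) < 1 / (n₀ : ℝ))]
      have hbig : |∑ i ∈ Finset.range n₀,
          (g (Zs false i ω) - Real.exp ⟪θh n₀ n₁ ω, f (Zs false i ω)⟫)|
          ≤ (n₀ : ℝ) * (M * (b * ‖θh n₀ n₁ ω - θt‖)) := by
        calc |∑ i ∈ Finset.range n₀,
            (g (Zs false i ω) - Real.exp ⟪θh n₀ n₁ ω, f (Zs false i ω)⟫)|
            ≤ ∑ i ∈ Finset.range n₀,
              |g (Zs false i ω) - Real.exp ⟪θh n₀ n₁ ω, f (Zs false i ω)⟫| :=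
              Finset.abs_sum_le_sum_abs _ _
        _ ≤ ∑ _i ∈ Finset.range n₀, M * (b * ‖θh n₀ n₁ ω - θt‖) :=
              Finset.sum_le_sum fun i hi => by
                rw [abs_sub_comm]; exact hterm i hi
        _ = (n₀ : ℝ) * (M * (b * ‖θh n₀ n₁ ω - θt‖)) := by
              rw [Finset.sum_const, Finset.card_range, nsmul_eq_mul]
      calc (1 / (n₀ : ℝ)) * |∑ i ∈ Finset.range n₀,
          (g (Zs false i ω) - Real.exp ⟪θh n₀ n₁ ω, f (Zs false i ω)⟫)|
          ≤ (1 / (n₀ : ℝ)) * ((n₀ : ℝ) * (M * (b * ‖θh n₀ n₁ ω - θt‖))) :=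
            mul_le_mul_of_nonneg_left hbig (by positivity)
      _ = M * (b * ‖θh n₀ n₁ ω - θt‖) := by field_simp
    -- numeric combination
    have hfinal : a + M * (b * Real.sqrt (2 * C₀ * L / n)) ≤ Real.sqrt (CN * L / n) := by
      have e1 : a ≤ Real.sqrt 12 * M * Real.sqrt (L / n) := by
        rw [hadef]
        calc Real.sqrt (12 * M ^ 2 * L / (n₀ : ℝ))
            ≤ Real.sqrt (12 * M ^ 2 * (L / n)) := by
              apply Real.sqrt_le_sqrt
              rw [mul_div_assoc]
              exact mul_le_mul_of_nonneg_left
                (div_le_div_of_nonneg_left hLpos.le hnpos hnlen₀) (by positivity)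
        _ = Real.sqrt 12 * M * Real.sqrt (L / n) := by
              rw [show 12 * M ^ 2 * (L / n) = (Real.sqrt 12 * M) ^ 2 * (L / n) by
                  rw [mul_pow, Real.sq_sqrt (by norm_num : (0:ℝ) ≤ 12)],
                Real.sqrt_mul (by positivity), Real.sqrt_sq (by positivity)]
      have e2 : M * (b * Real.sqrt (2 * C₀ * L / n))
          = Real.sqrt (2 * C₀) * (b * M) * Real.sqrt (L / n) := by
        rw [show 2 * C₀ * L / n = 2 * C₀ * (L / n) by ring,
          Real.sqrt_mul (by positivity)]
        ring
      calc a + M * (b * Real.sqrt (2 * C₀ * L / n))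
          ≤ Real.sqrt 12 * M * Real.sqrt (L / n)
            + Real.sqrt (2 * C₀) * (b * M) * Real.sqrt (L / n) := by
            rw [e2]
            exact add_le_add e1 le_rfl
      _ = K * Real.sqrt (L / n) := by rw [hKdef]; ring
      _ = Real.sqrt (K ^ 2 * (L / n)) := by
            rw [Real.sqrt_mul (by positivity), Real.sqrt_sq hK0]
      _ ≤ Real.sqrt (CN * L / n) := by
            apply Real.sqrt_le_sqrt
            rw [mul_div_assoc]
            apply mul_le_mul_of_nonneg_right ?_ (div_nonneg hLpos.le hnpos.le)
            rw [hCNdef]; linarith [hC₀one]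
    -- put it together
    have htri : |μs - (1 / (n₀ : ℝ)) * ∑ i ∈ Finset.range n₀,
        Real.exp ⟪θh n₀ n₁ ω, f (Zs false i ω)⟫|
        ≤ a + M * (b * ‖θh n₀ n₁ ω - θt‖) := by
      have habc : μs - (1 / (n₀ : ℝ)) * ∑ i ∈ Finset.range n₀,
          Real.exp ⟪θh n₀ n₁ ω, f (Zs false i ω)⟫
          = (μs - (1 / (n₀ : ℝ)) * ∑ i ∈ Finset.range n₀, g (Zs false i ω))
            + ((1 / (n₀ : ℝ)) * ∑ i ∈ Finset.range n₀, g (Zs false i ω)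
              - (1 / (n₀ : ℝ)) * ∑ i ∈ Finset.range n₀,
                  Real.exp ⟪θh n₀ n₁ ω, f (Zs false i ω)⟫) := by ring
      rw [habc]
      exact (abs_add_le _ _).trans (add_le_add hfirst hsecond)
    refine htri.trans (le_trans ?_ hfinal)
    have hmono : M * (b * ‖θh n₀ n₁ ω - θt‖)
        ≤ M * (b * Real.sqrt (2 * C₀ * L / n)) := by
      apply mul_le_mul_of_nonneg_left ?_ hMpos.le
      exact mul_le_mul_of_nonneg_left hθnorm hb0
    linarith
  -- probability bookkeeping
  have hAsub : A ⊆ (A ∩ Badᶜ) ∪ Bad := by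
    intro ω hω
    by_cases h : ω ∈ Bad
    · exact Or.inr h
    · exact Or.inl ⟨hω, h⟩
  have hPA : P A ≤ P (A ∩ Badᶜ) + P Bad :=
    (measure_mono hAsub).trans (measure_union_le _ _)
  calc ENNReal.ofReal (1 - δ)
      ≤ ENNReal.ofReal (1 - δ / 2) - ENNReal.ofReal (δ / 2) := by
        rw [← ENNReal.ofReal_sub _ (by linarith : (0:ℝ) ≤ δ / 2)]
        apply ENNReal.ofReal_le_ofReal; linarith
  _ ≤ P A - ENNReal.ofReal (δ / 2) := tsub_le_tsub_right hA _
  _ ≤ (P (A ∩ Badᶜ) + P Bad) - ENNReal.ofReal (δ / 2) := tsub_le_tsub_right hPA _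
  _ ≤ (P (A ∩ Badᶜ) + ENNReal.ofReal (δ / 2)) - ENNReal.ofReal (δ / 2) :=
        tsub_le_tsub_right (add_le_add le_rfl hBadle) _
  _ = P (A ∩ Badᶜ) := ENNReal.add_sub_cancel_right ENNReal.ofReal_ne_top
  _ ≤ P {ω | |μs - (1 / (n₀ : ℝ)) * ∑ i ∈ Finset.range n₀,
        Real.exp ⟪θh n₀ n₁ ω, f (Zs false i ω)⟫| ≤ Real.sqrt (CN * L / n)} :=
        measure_mono hsubset
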